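/- Let Λ be a k-graph and λ ∈ Q_r(Λ) an r-cube (a morphism with degree ≤ (1,…,1) and |d(λ)| = r). Then for all 1 ≤ i < j ≤ r and ℓ, m ∈ {0,1}, the face maps satisfy F_i^ℓ(F_j^m(λ)) = F_{j-1}^m(F_i^ℓ(λ)). -/

import Mathlib

namespace KGH

/-- A `k`-graph: a (small, nonempty) category with a degree functor `d : Λ → ℕ^k`
satisfying the unique factorisation property.  Composition `comp f g` is the paper's
`f g`, defined when `s(f) = r(g)`, i.e. `dom f = cod g`. -/
structure KGraph (k : ℕ) where
  Obj : Type
  Mor : Type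
  dom : Mor → Obj
  cod : Mor → Obj
  idm : Obj → Mor
  comp : Mor → Mor → Mor
  d : Mor → Fin k → ℕ
  nonempty : Nonempty Obj
  dom_idm : ∀ o, dom (idm o) = o
  cod_idm : ∀ o, cod (idm o) = o
  d_idm : ∀ o, d (idm o) = 0
  dom_comp : ∀ f g, dom f = cod g → dom (comp f g) = dom g
  cod_comp : ∀ f g, dom f = cod g → cod (comp f g) = cod f
  d_comp : ∀ f g, dom f = cod g → d (comp f g) = d f + d g
  idm_comp : ∀ f, comp (idm (cod f)) f = f
  comp_idm : ∀ f, comp f (idm (dom f)) = f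
  comp_assoc : ∀ f g h, dom f = cod g → dom g = cod h →
      comp (comp f g) h = comp f (comp g h)
  factor : ∀ f (m n : Fin k → ℕ), d f = m + n →
      ∃! p : Mor × Mor, dom p.1 = cod p.2 ∧ d p.1 = m ∧ d p.2 = n ∧ comp p.1 p.2 = f

namespace KGraph

variable {k : ℕ}

/-- the total degree `|λ|` of a morphism. -/
def deg (Λ : KGraph k) (f : Λ.Mor) : ℕ := ∑ i, Λ.d f i

/-- split `f` as `f = p.1 p.2` with `d p.1 = m` (junk value if `m ≰ d f`). -/
noncomputable def splitAt (Λ : KGraph k) (f : Λ.Mor) (m : Fin k → ℕ) : Λ.Mor × Λ.Mor :=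
  if h : Λ.d f = m + (Λ.d f - m) then Classical.choose (Λ.factor f m (Λ.d f - m) h)
  else (f, f)

/-- the factorisation segment `λ(m,n)`. -/
noncomputable def seg (Λ : KGraph k) (f : Λ.Mor) (m n : Fin k → ℕ) : Λ.Mor :=
  (Λ.splitAt (Λ.splitAt f m).2 (n - m)).1

/-- the (sorted) list of coordinates in which `f` has nonzero degree. -/
noncomputable def suppList (Λ : KGraph k) (f : Λ.Mor) : List (Fin k) :=
  (Finset.univ.filter fun i => Λ.d f i ≠ 0).sort (· ≤ ·)

/-- the face maps `F_j^ℓ` (`j` is 1-based; `ℓ = false` is `F_j^0`, `ℓ = true` is `F_j^1`). -/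
noncomputable def face (Λ : KGraph k) (j : ℕ) (ℓ : Bool) (f : Λ.Mor) : Λ.Mor :=
  match (Λ.suppList f)[j-1]? with
  | none => f
  | some i =>
    if ℓ then Λ.seg f (Pi.single i 1) (Λ.d f)
    else Λ.seg f 0 (Λ.d f - Pi.single i 1)

/-- `Q_r(Λ)`, the set of `r`-cubes: morphisms of degree `≤ 1_k` with `|d λ| = r`. -/
def QSet (Λ : KGraph k) (r : ℕ) : Set Λ.Mor :=
  {f | (∀ i, Λ.d f i ≤ 1) ∧ Λ.deg f = r}

/-- the (total) group of chains. -/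
abbrev Chain (Λ : KGraph k) : Type := Λ.Mor →₀ ℤ

/-- the boundary of a generator: `∂ λ = Σ_{ℓ,i} (-1)^{i+ℓ} F_i^ℓ(λ)`. -/
noncomputable def bdFun (Λ : KGraph k) (f : Λ.Mor) : Λ.Chain :=
  ∑ j ∈ Finset.range (Λ.deg f),
    ((-1 : ℤ) ^ (j + 1) • Finsupp.single (Λ.face (j+1) false f) (1 : ℤ)
      + (-1 : ℤ) ^ j • Finsupp.single (Λ.face (j+1) true f) (1 : ℤ))

/-- the boundary map `∂` on chains. -/
noncomputable def bd (Λ : KGraph k) : Λ.Chain →ₗ[ℤ] Λ.Chain :=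
  Finsupp.lift Λ.Chain ℤ Λ.Mor Λ.bdFun

/-- `C_r(Λ) = ℤ Q_r(Λ)`, as the submodule of chains supported on `Q_r(Λ)`. -/
noncomputable def CS (Λ : KGraph k) (r : ℕ) : Submodule ℤ Λ.Chain :=
  Finsupp.supported ℤ ℤ (Λ.QSet r)

/-- the `r`-cycles `ker ∂_r`. -/
noncomputable def cycles (Λ : KGraph k) (r : ℕ) : Submodule ℤ Λ.Chain :=
  Λ.CS r ⊓ LinearMap.ker Λ.bd

/-- the `r`-boundaries `im ∂_{r+1}`. -/
noncomputable def bdries (Λ : KGraph k) (r : ℕ) : Submodule ℤ Λ.Chain :=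
  (Λ.CS (r+1)).map Λ.bd

/-- the homology `H_r(Λ) = ker ∂_r / im ∂_{r+1}`. -/
noncomputable abbrev H (Λ : KGraph k) (r : ℕ) :=
  Λ.cycles r ⧸ ((Λ.bdries r).comap (Λ.cycles r).subtype)

/-- the relation `{(r(λ), s(λ))}` on vertices. -/
def rel (Λ : KGraph k) : Λ.Obj → Λ.Obj → Prop :=
  fun u v => ∃ f : Λ.Mor, Λ.cod f = u ∧ Λ.dom f = v

/-- connectedness: the equivalence relation generated by `rel` is total. -/
def Connected (Λ : KGraph k) : Prop :=
  ∀ u v : Λ.Obj, Relation.EqvGen Λ.rel u v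

/-- the setoid of connected components. -/
def compSetoid (Λ : KGraph k) : Setoid Λ.Obj :=
  ⟨Relation.EqvGen Λ.rel, Relation.EqvGen.is_equivalence _⟩

/-- `s(f, m)` for an orientation `m ∈ {1, -1}`. -/
def sV (Λ : KGraph k) (f : Λ.Mor) (m : ℤ) : Λ.Obj :=
  if m = 1 then Λ.dom f else Λ.cod f

/-- `r(f, m) = s(f, -m)`. -/
def rV (Λ : KGraph k) (f : Λ.Mor) (m : ℤ) : Λ.Obj := Λ.sV f (-m)

/-- an undirected path: a sequence of edges with orientations whose endpoints match. -/
def IsUPath (Λ : KGraph k) (n : ℕ) (g : Fin n → Λ.Mor) (m : Fin n → ℤ) : Prop :=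
  (∀ i, g i ∈ Λ.QSet 1) ∧ (∀ i, m i = 1 ∨ m i = -1) ∧
  ∀ (i : ℕ) (h : i + 1 < n),
    Λ.sV (g ⟨i, Nat.lt_of_succ_lt h⟩) (m ⟨i, Nat.lt_of_succ_lt h⟩) =
    Λ.rV (g ⟨i+1, h⟩) (m ⟨i+1, h⟩)

/-- the source of an undirected path. -/
def pathSrc (Λ : KGraph k) {n : ℕ} (g : Fin (n+1) → Λ.Mor) (m : Fin (n+1) → ℤ) : Λ.Obj :=
  Λ.sV (g (Fin.last n)) (m (Fin.last n))

/-- the range of an undirected path. -/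
def pathRng (Λ : KGraph k) {n : ℕ} (g : Fin (n+1) → Λ.Mor) (m : Fin (n+1) → ℤ) : Λ.Obj :=
  Λ.rV (g 0) (m 0)

/-- the trail `Σᵢ mᵢ gᵢ` of an undirected path. -/
noncomputable def trailOf (Λ : KGraph k) {n : ℕ} (g : Fin n → Λ.Mor) (m : Fin n → ℤ) :
    Λ.Chain :=
  ∑ i, m i • Finsupp.single (g i) (1 : ℤ)

/-- `h` is a simple closed trail. -/
def IsSimpleClosedTrail (Λ : KGraph k) (h : Λ.Chain) : Prop :=
  ∃ (n : ℕ) (g : Fin (n+1) → Λ.Mor) (m : Fin (n+1) → ℤ),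
    Λ.IsUPath (n+1) g m ∧ Λ.pathSrc g m = Λ.pathRng g m ∧
    Function.Injective (fun i => Λ.sV (g i) (m i)) ∧
    h = Λ.trailOf g m

end KGraph

end KGH

section Aux

open KGH KGraph

namespace KGH.KGraph

variable {k : ℕ} (Λ : KGraph k)

private lemma sub_cond {m df : Fin k → ℕ} (h : ∀ i2, m i2 ≤ df i2) :
    df = m + (df - m) := funext fun i2 => by
  have := h i2
  simp only [Pi.add_apply, Pi.sub_apply]
  omega

private lemma split_spec (f : Λ.Mor) (m : Fin k → ℕ) (h : ∀ i2, m i2 ≤ Λ.d f i2) :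
    Λ.dom (Λ.splitAt f m).1 = Λ.cod (Λ.splitAt f m).2 ∧ Λ.d (Λ.splitAt f m).1 = m ∧
    Λ.d (Λ.splitAt f m).2 = Λ.d f - m ∧ Λ.comp (Λ.splitAt f m).1 (Λ.splitAt f m).2 = f := by
  have hc : Λ.d f = m + (Λ.d f - m) := sub_cond h
  unfold KGraph.splitAt
  rw [dif_pos hc]
  exact (Classical.choose_spec (Λ.factor f m (Λ.d f - m) hc)).1

private lemma split_eq (f : Λ.Mor) (m : Fin k → ℕ) (h : ∀ i2, m i2 ≤ Λ.d f i2)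
    (p q : Λ.Mor) (h1 : Λ.dom p = Λ.cod q) (h2 : Λ.d p = m) (h3 : Λ.d q = Λ.d f - m)
    (h4 : Λ.comp p q = f) : Λ.splitAt f m = (p, q) := by
  have hc : Λ.d f = m + (Λ.d f - m) := sub_cond h
  unfold KGraph.splitAt
  rw [dif_pos hc]
  exact ((Classical.choose_spec (Λ.factor f m (Λ.d f - m) hc)).2 (p, q) ⟨h1, h2, h3, h4⟩).symm

private lemma split_full (f : Λ.Mor) : Λ.splitAt f (Λ.d f) = (f, Λ.idm (Λ.dom f)) := by
  apply Λ.split_eq f (Λ.d f) (fun i2 => le_rfl) f (Λ.idm (Λ.dom f))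
  · rw [Λ.cod_idm]
  · rfl
  · rw [Λ.d_idm]; funext i2; simp
  · exact Λ.comp_idm f

private lemma split_zero (f : Λ.Mor) : Λ.splitAt f 0 = (Λ.idm (Λ.cod f), f) := by
  apply Λ.split_eq f 0 (fun i2 => Nat.zero_le _) (Λ.idm (Λ.cod f)) f
  · rw [Λ.dom_idm]
  · exact Λ.d_idm _
  · funext i2; simp
  · exact Λ.idm_comp f

private lemma tail_tail (f : Λ.Mor) (m n : Fin k → ℕ)
    (h : ∀ i2, m i2 + n i2 ≤ Λ.d f i2) :
    (Λ.splitAt (Λ.splitAt f m).2 n).2 = (Λ.splitAt f (m + n)).2 := by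
  obtain ⟨hpq, hdp, hdq, hcpq⟩ :=
    Λ.split_spec f m (fun i2 => le_trans (Nat.le_add_right _ _) (h i2))
  set p := (Λ.splitAt f m).1 with hp
  set q := (Λ.splitAt f m).2 with hq
  have hn : ∀ i2, n i2 ≤ Λ.d q i2 := fun i2 => by
    rw [hdq]; simp only [Pi.sub_apply]; have := h i2; omega
  obtain ⟨huv, hdu, hdv, hcuv⟩ := Λ.split_spec q n hn
  set u := (Λ.splitAt q n).1 with hu
  set v := (Λ.splitAt q n).2 with hv
  have hpu : Λ.dom p = Λ.cod u := by rw [hpq, ← hcuv, Λ.cod_comp u v huv]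
  have key : Λ.splitAt f (m + n) = (Λ.comp p u, v) := by
    apply Λ.split_eq f (m + n) h
    · rw [Λ.dom_comp p u hpu, huv]
    · rw [Λ.d_comp p u hpu, hdp, hdu]
    · rw [hdv, hdq]; funext i2
      simp only [Pi.sub_apply, Pi.add_apply]
      have := h i2; omega
    · rw [Λ.comp_assoc p u v hpu huv, hcuv, hcpq]
  rw [key]

private lemma head_head (f : Λ.Mor) (m n : Fin k → ℕ)
    (hm : ∀ i2, m i2 ≤ Λ.d f i2) (hnm : ∀ i2, n i2 ≤ m i2) :
    (Λ.splitAt (Λ.splitAt f m).1 n).1 = (Λ.splitAt f n).1 := by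
  obtain ⟨hpq, hdp, hdq, hcpq⟩ := Λ.split_spec f m hm
  set p := (Λ.splitAt f m).1 with hp
  set q := (Λ.splitAt f m).2 with hq
  have hn : ∀ i2, n i2 ≤ Λ.d p i2 := fun i2 => by rw [hdp]; exact hnm i2
  obtain ⟨hxy, hdx, hdy, hcxy⟩ := Λ.split_spec p n hn
  set x := (Λ.splitAt p n).1 with hx
  set y := (Λ.splitAt p n).2 with hy
  have hyq : Λ.dom y = Λ.cod q := by rw [← hpq, ← hcxy, Λ.dom_comp x y hxy]
  have key : Λ.splitAt f n = (x, Λ.comp y q) := by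
    apply Λ.split_eq f n (fun i2 => le_trans (hnm i2) (hm i2)) x (Λ.comp y q)
    · rw [Λ.cod_comp y q hyq, hxy]
    · exact hdx
    · rw [Λ.d_comp y q hyq, hdy, hdp, hdq]; funext i2
      simp only [Pi.sub_apply, Pi.add_apply]
      have := hm i2; have := hnm i2; omega
    · rw [← Λ.comp_assoc x y q hxy hyq, hcxy, hcpq]
  rw [key]

private lemma tail_head (f : Λ.Mor) (m n : Fin k → ℕ)
    (h : ∀ i2, m i2 + n i2 ≤ Λ.d f i2) :
    (Λ.splitAt (Λ.splitAt f (m + n)).1 m).2 = (Λ.splitAt (Λ.splitAt f m).2 n).1 := by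
  obtain ⟨hpq, hdp, hdq, hcpq⟩ :=
    Λ.split_spec f m (fun i2 => le_trans (Nat.le_add_right _ _) (h i2))
  set p := (Λ.splitAt f m).1 with hp
  set q := (Λ.splitAt f m).2 with hq
  have hn : ∀ i2, n i2 ≤ Λ.d q i2 := fun i2 => by
    rw [hdq]; simp only [Pi.sub_apply]; have := h i2; omega
  obtain ⟨huv, hdu, hdv, hcuv⟩ := Λ.split_spec q n hn
  set u := (Λ.splitAt q n).1 with hu
  set v := (Λ.splitAt q n).2 with hv
  have hpu : Λ.dom p = Λ.cod u := by rw [hpq, ← hcuv, Λ.cod_comp u v huv]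
  have key : Λ.splitAt f (m + n) = (Λ.comp p u, v) := by
    apply Λ.split_eq f (m + n) h
    · rw [Λ.dom_comp p u hpu, huv]
    · rw [Λ.d_comp p u hpu, hdp, hdu]
    · rw [hdv, hdq]; funext i2
      simp only [Pi.sub_apply, Pi.add_apply]
      have := h i2; omega
    · rw [Λ.comp_assoc p u v hpu huv, hcuv, hcpq]
  rw [key]
  have key2 : Λ.splitAt (Λ.comp p u) m = (p, u) := by
    apply Λ.split_eq (Λ.comp p u) m
    · intro i2; rw [Λ.d_comp p u hpu, hdp, hdu]; simp only [Pi.add_apply]; omega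
    · exact hpu
    · exact hdp
    · rw [Λ.d_comp p u hpu, hdp, hdu]; funext i2
      simp only [Pi.sub_apply, Pi.add_apply]; omega
    · rfl
  rw [key2]

private lemma suppList_nodup (f : Λ.Mor) : (Λ.suppList f).Nodup :=
  Finset.sort_nodup _ _

private lemma suppList_sorted (f : Λ.Mor) : List.Pairwise (· ≤ ·) (Λ.suppList f) :=
  Finset.pairwise_sort _ _

private lemma mem_suppList {f : Λ.Mor} {b : Fin k} : b ∈ Λ.suppList f ↔ Λ.d f b ≠ 0 := by
  simp [KGraph.suppList, Finset.mem_sort, Finset.mem_filter]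

private lemma face_true_eq (f : Λ.Mor) (j : ℕ) (b : Fin k)
    (hb : (Λ.suppList f)[j-1]? = some b) :
    Λ.face j true f = (Λ.splitAt f (Pi.single b 1)).2 := by
  have hbmem : b ∈ Λ.suppList f := by
    obtain ⟨h', he⟩ := List.getElem?_eq_some_iff.1 hb
    exact he ▸ List.getElem_mem h'
  have hb1 : 1 ≤ Λ.d f b := Nat.one_le_iff_ne_zero.2 ((Λ.mem_suppList).1 hbmem)
  have hle : ∀ i2, (Pi.single b 1 : Fin k → ℕ) i2 ≤ Λ.d f i2 := fun i2 => by
    rcases eq_or_ne i2 b with rfl | hne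
    · simpa using hb1
    · simp [Pi.single_apply, hne]
  obtain ⟨hpq, hdp, hdq, hcpq⟩ := Λ.split_spec f (Pi.single b 1) hle
  unfold KGraph.face
  rw [hb]
  show Λ.seg f (Pi.single b 1) (Λ.d f) = (Λ.splitAt f (Pi.single b 1)).2
  unfold KGraph.seg
  rw [show Λ.d f - Pi.single b 1 = Λ.d (Λ.splitAt f (Pi.single b 1)).2 from hdq.symm,
    Λ.split_full]

private lemma face_false_eq (f : Λ.Mor) (j : ℕ) (b : Fin k)
    (hb : (Λ.suppList f)[j-1]? = some b) :
    Λ.face j false f = (Λ.splitAt f (Λ.d f - Pi.single b 1)).1 := by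
  unfold KGraph.face
  rw [hb]
  show Λ.seg f 0 (Λ.d f - Pi.single b 1) = (Λ.splitAt f (Λ.d f - Pi.single b 1)).1
  unfold KGraph.seg
  rw [Λ.split_zero]
  norm_num

private lemma d_face (f : Λ.Mor) (j : ℕ) (b : Fin k) (ℓ : Bool)
    (hb : (Λ.suppList f)[j-1]? = some b) :
    Λ.d (Λ.face j ℓ f) = Λ.d f - Pi.single b 1 := by
  have hbmem : b ∈ Λ.suppList f := by
    obtain ⟨h', he⟩ := List.getElem?_eq_some_iff.1 hb
    exact he ▸ List.getElem_mem h'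
  have hb1 : 1 ≤ Λ.d f b := Nat.one_le_iff_ne_zero.2 ((Λ.mem_suppList).1 hbmem)
  have hle : ∀ i2, (Pi.single b 1 : Fin k → ℕ) i2 ≤ Λ.d f i2 := fun i2 => by
    rcases eq_or_ne i2 b with rfl | hne
    · simpa using hb1
    · simp [Pi.single_apply, hne]
  cases ℓ
  · rw [Λ.face_false_eq f j b hb]
    exact (Λ.split_spec f (Λ.d f - Pi.single b 1) (fun i2 => Nat.sub_le _ _)).2.1
  · rw [Λ.face_true_eq f j b hb]
    exact (Λ.split_spec f (Pi.single b 1) hle).2.2.1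

private lemma length_suppList (f : Λ.Mor) (h1 : ∀ i2, Λ.d f i2 ≤ 1) :
    (Λ.suppList f).length = Λ.deg f := by
  rw [KGraph.suppList, Finset.length_sort, KGraph.deg, Finset.card_filter]
  apply Finset.sum_congr rfl
  intro i2 _
  have := h1 i2
  split <;> omega

private lemma suppList_face (f : Λ.Mor) (h1 : ∀ i2, Λ.d f i2 ≤ 1) (j : ℕ) (b : Fin k)
    (ℓ : Bool) (hb : (Λ.suppList f)[j-1]? = some b) :
    Λ.suppList (Λ.face j ℓ f) = (Λ.suppList f).eraseIdx (j-1) := by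
  have hd := Λ.d_face f j b ℓ hb
  obtain ⟨hjlt, hbeq⟩ := List.getElem?_eq_some_iff.1 hb
  have hnd : (Λ.suppList f).Nodup := Λ.suppList_nodup f
  have hnd2 : ((Λ.suppList f).eraseIdx (j-1)).Nodup :=
    (List.eraseIdx_sublist _ _).nodup hnd
  have hperm : (Λ.suppList (Λ.face j ℓ f)).Perm ((Λ.suppList f).eraseIdx (j-1)) := by
    rw [List.perm_ext_iff_of_nodup (Λ.suppList_nodup _) hnd2]
    intro a
    rw [Λ.mem_suppList, List.mem_eraseIdx_iff_getElem, hd]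
    constructor
    · intro ha
      simp only [Pi.sub_apply] at ha
      have hab : a ≠ b := by
        rintro rfl
        have := h1 a
        simp only [Pi.single_apply, if_pos rfl, if_true] at ha
        omega
      have ha' : Λ.d f a ≠ 0 := by
        simp only [Pi.single_apply, if_neg hab] at ha
        omega
      obtain ⟨i0, hi0, hai⟩ := List.mem_iff_getElem.1 ((Λ.mem_suppList).2 ha')
      refine ⟨i0, hi0, ?_, hai⟩
      rintro rfl
      exact hab (by rw [← hai, hbeq])
    · rintro ⟨i0, hi0, hne, hai⟩
      have ha' : Λ.d f a ≠ 0 := (Λ.mem_suppList).1 (hai ▸ List.getElem_mem hi0)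
      have hab : a ≠ b := by
        rintro rfl
        exact hne (hnd.getElem_inj_iff.1 (hai.trans hbeq.symm))
      simp only [Pi.sub_apply, Pi.single_apply, if_neg hab]
      omega
  exact List.Perm.eq_of_pairwise' (Λ.suppList_sorted _)
    (List.Pairwise.sublist (List.eraseIdx_sublist _ _) (Λ.suppList_sorted f)) hperm

end KGH.KGraph

end Aux

open KGH KGraph in
/-- the cubical relation for face maps of an `r`-cube:
`F_i^ℓ(F_j^m(λ)) = F_{j-1}^m(F_i^ℓ(λ))` for `1 ≤ i < j ≤ r`. -/
theorem statement0 {k : ℕ} (Λ : KGraph k) (r : ℕ) (f : Λ.Mor) (hf : f ∈ Λ.QSet r)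
    (i j : ℕ) (hi : 1 ≤ i) (hij : i < j) (hj : j ≤ r) (ℓ m : Bool) :
    Λ.face i ℓ (Λ.face j m f) = Λ.face (j - 1) m (Λ.face i ℓ f) := by
  obtain ⟨h1, h2⟩ := hf
  have hlen : (Λ.suppList f).length = r := by rw [Λ.length_suppList f h1, h2]
  have hjl : j - 1 < (Λ.suppList f).length := by omega
  have hil : i - 1 < (Λ.suppList f).length := by omega
  obtain ⟨b, hbq⟩ : ∃ b, (Λ.suppList f)[j-1]? = some b := ⟨_, List.getElem?_eq_getElem hjl⟩
  obtain ⟨a, haq⟩ : ∃ a, (Λ.suppList f)[i-1]? = some a := ⟨_, List.getElem?_eq_getElem hil⟩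
  obtain ⟨hjl', hbeq⟩ := List.getElem?_eq_some_iff.1 hbq
  obtain ⟨hil', haeq⟩ := List.getElem?_eq_some_iff.1 haq
  have hnd := Λ.suppList_nodup f
  have hab : a ≠ b := by
    rintro rfl
    have := hnd.getElem_inj_iff.1 (haeq.trans hbeq.symm)
    omega
  have hda : Λ.d f a = 1 := by
    have h0 := (Λ.mem_suppList).1 (haeq ▸ List.getElem_mem hil')
    have := h1 a; omega
  have hdb : Λ.d f b = 1 := by
    have h0 := (Λ.mem_suppList).1 (hbeq ▸ List.getElem_mem hjl')
    have := h1 b; omega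
  have hSj := Λ.suppList_face f h1 j b m hbq
  have hSi := Λ.suppList_face f h1 i a ℓ haq
  have hdfj : Λ.d (Λ.face j m f) = Λ.d f - Pi.single b 1 := Λ.d_face f j b m hbq
  have hdfi : Λ.d (Λ.face i ℓ f) = Λ.d f - Pi.single a 1 := Λ.d_face f i a ℓ haq
  have hlej : ((Λ.suppList f).eraseIdx (j-1)).length = r - 1 := by
    rw [List.length_eraseIdx, if_pos hjl, hlen]
  have hlei : ((Λ.suppList f).eraseIdx (i-1)).length = r - 1 := by
    rw [List.length_eraseIdx, if_pos hil, hlen]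
  have ha2 : (Λ.suppList (Λ.face j m f))[i-1]? = some a := by
    rw [hSj]
    have hlt : i - 1 < ((Λ.suppList f).eraseIdx (j-1)).length := by omega
    rw [List.getElem?_eq_getElem hlt, List.getElem_eraseIdx_of_lt hlt (by omega), haeq]
  have hb2 : (Λ.suppList (Λ.face i ℓ f))[j-1-1]? = some b := by
    rw [hSi]
    have hlt : j - 1 - 1 < ((Λ.suppList f).eraseIdx (i-1)).length := by omega
    rw [List.getElem?_eq_getElem hlt, List.getElem_eraseIdx_of_ge hlt (by omega)]
    simp only [show j - 1 - 1 + 1 = j - 1 from by omega, hbeq]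
  have hsum : ∀ i2, (Pi.single a 1 : Fin k → ℕ) i2 + (Pi.single b 1 : Fin k → ℕ) i2
      ≤ Λ.d f i2 := by
    intro i2
    simp only [Pi.single_apply]
    rcases eq_or_ne i2 a with rfl | h' <;> rcases eq_or_ne i2 b with rfl | h'' <;>
      simp_all
  have hsum' : ∀ i2, (Pi.single b 1 : Fin k → ℕ) i2 + (Pi.single a 1 : Fin k → ℕ) i2
      ≤ Λ.d f i2 := fun i2 => by have := hsum i2; omega
  cases ℓ <;> cases m
  · -- ℓ = false, m = false
    rw [Λ.face_false_eq _ i a ha2, hdfj, Λ.face_false_eq f j b hbq,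
      Λ.face_false_eq _ (j-1) b hb2, hdfi, Λ.face_false_eq f i a haq,
      Λ.head_head f (Λ.d f - Pi.single b 1) (Λ.d f - Pi.single b 1 - Pi.single a 1)
        (fun i2 => Nat.sub_le _ _) (fun i2 => Nat.sub_le _ _),
      Λ.head_head f (Λ.d f - Pi.single a 1) (Λ.d f - Pi.single a 1 - Pi.single b 1)
        (fun i2 => Nat.sub_le _ _) (fun i2 => Nat.sub_le _ _)]
    have : Λ.d f - Pi.single b 1 - Pi.single a 1 = Λ.d f - Pi.single a 1 - Pi.single b 1 := by
      funext i2
      simp only [Pi.sub_apply]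
      omega
    rw [this]
  · -- ℓ = false, m = true
    rw [Λ.face_false_eq _ i a ha2, hdfj, Λ.face_true_eq f j b hbq,
      Λ.face_true_eq _ (j-1) b hb2, Λ.face_false_eq f i a haq]
    have hEq : Λ.d f - Pi.single a 1
        = Pi.single b 1 + (Λ.d f - Pi.single b 1 - Pi.single a 1) := by
      funext i2
      simp only [Pi.add_apply, Pi.sub_apply, Pi.single_apply]
      rcases eq_or_ne i2 a with rfl | h' <;> rcases eq_or_ne i2 b with rfl | h'' <;>
        simp_all
    rw [hEq, Λ.tail_head f (Pi.single b 1) (Λ.d f - Pi.single b 1 - Pi.single a 1)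
      (fun i2 => by have := hsum' i2; simp only [Pi.sub_apply]; omega)]
  · -- ℓ = true, m = false
    rw [Λ.face_true_eq _ i a ha2, Λ.face_false_eq f j b hbq,
      Λ.face_false_eq _ (j-1) b hb2, hdfi, Λ.face_true_eq f i a haq]
    have hEq : Λ.d f - Pi.single b 1
        = Pi.single a 1 + (Λ.d f - Pi.single a 1 - Pi.single b 1) := by
      funext i2
      simp only [Pi.add_apply, Pi.sub_apply, Pi.single_apply]
      rcases eq_or_ne i2 a with rfl | h' <;> rcases eq_or_ne i2 b with rfl | h'' <;>
        simp_all
    rw [hEq, Λ.tail_head f (Pi.single a 1) (Λ.d f - Pi.single a 1 - Pi.single b 1)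
      (fun i2 => by have := hsum i2; simp only [Pi.sub_apply]; omega)]
  · -- ℓ = true, m = true
    rw [Λ.face_true_eq _ i a ha2, Λ.face_true_eq f j b hbq,
      Λ.face_true_eq _ (j-1) b hb2, Λ.face_true_eq f i a haq,
      Λ.tail_tail f (Pi.single b 1) (Pi.single a 1) hsum',
      Λ.tail_tail f (Pi.single a 1) (Pi.single b 1) hsum,
      add_comm (Pi.single b 1)]
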